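/- Let X be a uniformly convex Banach space over 𝕂 ∈ {ℝ, ℂ} and let x, y ∈ X. Then x is norm-parallel to y if and only if x and y are linearly dependent. -/

import Mathlib

theorem parallel_iff_linearly_dependent_of_uniformConvex
    {𝕜 X : Type*} [RCLike 𝕜] [NormedAddCommGroup X] [NormedSpace 𝕜 X]
    [CompleteSpace X] [UniformConvexSpace X] (x y : X) :
    (∃ lam : 𝕜, ‖lam‖ = 1 ∧ ‖x + lam • y‖ = ‖x‖ + ‖y‖) ↔
      ∃ a b : 𝕜, (a ≠ 0 ∨ b ≠ 0) ∧ a • x + b • y = 0 := by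
  letI : NormedSpace ℝ X := NormedSpace.restrictScalars ℝ 𝕜 X
  constructor
  · rintro ⟨lam, hlam, h⟩
    have h' : ‖x + lam • y‖ = ‖x‖ + ‖lam • y‖ := by
      rw [norm_smul, hlam, one_mul]; exact h
    have hsr : SameRay ℝ x (lam • y) := (sameRay_iff_norm_add).2 h'
    rcases hsr with hx | hy | ⟨r₁, r₂, hr₁, hr₂, heq⟩
    · exact ⟨1, 0, Or.inl one_ne_zero, by simp [hx]⟩
    · have hy0 : y = 0 := by
        have : lam ≠ 0 := by
          intro h0; rw [h0, norm_zero] at hlam; norm_num at hlam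
        simpa [this] using hy
      exact ⟨0, 1, Or.inr one_ne_zero, by simp [hy0]⟩
    · refine ⟨(r₁ : 𝕜), -(r₂ : 𝕜) * lam, Or.inl ?_, ?_⟩
      · exact_mod_cast ne_of_gt hr₁
      · have h1 : (r₁ : 𝕜) • x = r₁ • x := algebraMap_smul 𝕜 r₁ x
        have h2 : (r₂ : 𝕜) • (lam • y) = r₂ • (lam • y) := algebraMap_smul 𝕜 r₂ _
        rw [h1, heq, ← h2, neg_mul, neg_smul, mul_smul]
        abel
  · rintro ⟨a, b, hab, h⟩
    by_cases hy : y = 0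
    · exact ⟨1, by simp, by simp [hy]⟩
    by_cases ha : a = 0
    · exfalso
      rcases hab with h0 | hb
      · exact h0 ha
      · rw [ha, zero_smul, zero_add, smul_eq_zero] at h
        rcases h with h | h
        · exact hb h
        · exact hy h
    · have hx : x = (-b / a) • y := by
        have := congrArg (fun z => a⁻¹ • z) h
        simp only [smul_add, smul_smul, inv_mul_cancel₀ ha, one_smul, smul_zero, ← div_eq_inv_mul] at this
        rw [neg_div, neg_smul]
        exact eq_neg_of_add_eq_zero_left this
      set c : 𝕜 := -b / a with hc
      by_cases hc0 : c = 0
      · refine ⟨1, by simp, ?_⟩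
        rw [hx, hc0, zero_smul, zero_add, one_smul, norm_zero, zero_add]
      · refine ⟨c / (‖c‖ : 𝕜), ?_, ?_⟩
        · rw [norm_div, RCLike.norm_ofReal, abs_of_nonneg (norm_nonneg c),
            div_self (norm_ne_zero_iff.2 hc0)]
        · have hcn : (‖c‖ : 𝕜) ≠ 0 := by
            exact_mod_cast norm_ne_zero_iff.2 hc0
          rw [hx, ← add_smul, norm_smul, norm_smul]
          have : ‖c + c / (‖c‖ : 𝕜)‖ = ‖c‖ + 1 := by
            have : c + c / (‖c‖ : 𝕜) = c * (1 + (‖c‖ : 𝕜)⁻¹) := by ring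
            rw [this, norm_mul]
            have h1 : ‖(1 : 𝕜) + (‖c‖ : 𝕜)⁻¹‖ = 1 + ‖c‖⁻¹ := by
              rw [show ((1 : 𝕜) + (‖c‖ : 𝕜)⁻¹) = ((1 + ‖c‖⁻¹ : ℝ) : 𝕜) by push_cast; ring,
                RCLike.norm_ofReal, abs_of_nonneg]
              positivity
            rw [h1, mul_add, mul_inv_cancel₀ (norm_ne_zero_iff.2 hc0), mul_one]
          rw [this, add_mul, one_mul]
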